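/- Let α, β, γ, ζ > 0, n ≥ 1, d, w, x ∈ [0,1], r_s ≠ r_d, and let SW(c₁,…,cₙ,s) = −α(s−x)² − β∑ᵢ(w−cᵢ)² − (γ+ζ)∑ᵢ(s−cᵢ)² + r_d·n + ((r_s − r_d)/(s−d))·(∑ᵢ cᵢ − dn). If (c₁,…,cₙ,s) with s > d is a stationary point of SW, then c₁ = ⋯ = cₙ = (2βw + 2(γ+ζ)s + (r_s−r_d)/(s−d)) / (2β + 2(γ+ζ)), and y = s − d satisfies ω₄y⁴ + ω₃y³ + ω₁y + ω₀ = 0, where ω₀ = n(r_d−r_s)², ω₁ = 2βn(r_d−r_s)(d−w), ω₃ = 4[βn(d−w)(γ+ζ) + α(d−x)(β+γ+ζ)], ω₄ = 4[βn(γ+ζ) + α(β+γ+ζ)]. -/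

import Mathlib

noncomputable def SW (α β γ ζ rd rs d w x : ℝ) (n : ℕ) (c : Fin n → ℝ) (s : ℝ) : ℝ :=
  -α*(s - x)^2 - β*∑ i, (w - c i)^2 - (γ+ζ)*∑ i, (s - c i)^2
    + rd*n + ((rs - rd)/(s - d))*((∑ i, c i) - d*n)

lemma sum_upd_aux {n : ℕ} (c : Fin n → ℝ) (i : Fin n) (t : ℝ) (f : ℝ → ℝ) :
    ∑ j, f (Function.update c i t j) = f t + ∑ j ∈ Finset.univ.erase i, f (c j) := by
  have h : ∀ j ∈ Finset.univ, f (Function.update c i t j)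
      = Function.update (fun j => f (c j)) i (f t) j := by
    intro j _
    by_cases hji : j = i
    · subst hji; simp
    · simp [Function.update_of_ne hji]
  rw [Finset.sum_congr rfl h, Finset.sum_update_of_mem (Finset.mem_univ i)]
  congr 1
  exact Finset.sum_congr (by simp [Finset.sdiff_singleton_eq_erase]) (fun _ _ => rfl)

theorem stmt_17 (α β γ ζ rd rs d w x : ℝ)
    (hα : 0 < α) (hβ : 0 < β) (hγ : 0 < γ) (hζ : 0 < ζ)
    (n : ℕ) (hn : 1 ≤ n)
    (hd : d ∈ Set.Icc (0:ℝ) 1) (hw : w ∈ Set.Icc (0:ℝ) 1) (hx : x ∈ Set.Icc (0:ℝ) 1)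
    (hr : rs ≠ rd) (c : Fin n → ℝ) (s : ℝ) (hs : d < s)
    (hstatc : ∀ i, HasDerivAt
      (fun t => SW α β γ ζ rd rs d w x n (Function.update c i t) s) 0 (c i))
    (hstats : HasDerivAt (SW α β γ ζ rd rs d w x n c) 0 s) :
    (∀ i, c i = (2*β*w + 2*(γ+ζ)*s + (rs - rd)/(s - d)) / (2*β + 2*(γ+ζ))) ∧
    (4*(β*n*(γ+ζ) + α*(β+γ+ζ)))*(s - d)^4
      + (4*(β*n*(d - w)*(γ+ζ) + α*(d - x)*(β+γ+ζ)))*(s - d)^3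
      + (2*β*n*(rd - rs)*(d - w))*(s - d)
      + n*(rd - rs)^2 = 0 := by
  have hy : s - d ≠ 0 := sub_ne_zero.mpr (ne_of_gt hs)
  have hden : (2*β + 2*(γ+ζ)) ≠ 0 := by positivity
  -- first-order condition in each c i
  have key : ∀ i, 2*β*(w - c i) + 2*(γ+ζ)*(s - c i) + (rs - rd)/(s - d) = 0 := by
    intro i
    set S1 := ∑ j ∈ Finset.univ.erase i, (w - c j)^2 with hS1
    set S2 := ∑ j ∈ Finset.univ.erase i, (s - c j)^2 with hS2
    set S3 := ∑ j ∈ Finset.univ.erase i, c j with hS3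
    have hfun : (fun t => SW α β γ ζ rd rs d w x n (Function.update c i t) s)
        = fun t => -α*(s - x)^2 - β*((w - t)^2 + S1) - (γ+ζ)*((s - t)^2 + S2)
          + rd*n + ((rs - rd)/(s - d))*((t + S3) - d*n) := by
      funext t
      have e1 : ∑ j, (w - Function.update c i t j)^2 = (w - t)^2 + S1 :=
        sum_upd_aux c i t (fun y => (w - y)^2)
      have e2 : ∑ j, (s - Function.update c i t j)^2 = (s - t)^2 + S2 :=
        sum_upd_aux c i t (fun y => (s - y)^2)
      have e3 : ∑ j, Function.update c i t j = t + S3 :=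
        sum_upd_aux c i t (fun y => y)
      simp only [SW, e1, e2, e3]
    have hstat := hstatc i
    rw [hfun] at hstat
    have h1 : HasDerivAt (fun t:ℝ => (w - t)^2) (-(2*(w - c i))) (c i) := by
      simpa using ((hasDerivAt_id (c i)).const_sub w).fun_pow 2
    have h2 : HasDerivAt (fun t:ℝ => (s - t)^2) (-(2*(s - c i))) (c i) := by
      simpa using ((hasDerivAt_id (c i)).const_sub s).fun_pow 2
    have H : HasDerivAt (fun t => -α*(s - x)^2 - β*((w - t)^2 + S1) - (γ+ζ)*((s - t)^2 + S2)
          + rd*n + ((rs - rd)/(s - d))*((t + S3) - d*n))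
        (2*β*(w - c i) + 2*(γ+ζ)*(s - c i) + (rs - rd)/(s - d)) (c i) := by
      have hA := (h1.add_const S1).const_mul β
      have hB := (h2.add_const S2).const_mul (γ+ζ)
      have hC := (((hasDerivAt_id (c i)).add_const S3).sub_const
        (d*(n:ℝ))).const_mul ((rs - rd)/(s - d))
      have := ((((hasDerivAt_const (c i) (-α*(s - x)^2)).fun_sub hA).fun_sub hB).add_const
        (rd*(n:ℝ))).fun_add hC
      refine this.congr_deriv ?_
      ring
    linarith [H.unique hstat]
  -- all c i are equal to the claimed value
  have hc : ∀ i, c i = (2*β*w + 2*(γ+ζ)*s + (rs - rd)/(s - d)) / (2*β + 2*(γ+ζ)) := by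
    intro i
    rw [eq_div_iff hden]
    linarith [key i]
  refine ⟨hc, ?_⟩
  -- first-order condition in s
  have i0 : Fin n := ⟨0, hn⟩
  have hceq : ∀ j, c j = c i0 := fun j => (hc j).trans (hc i0).symm
  have hsum1 : ∑ j, c j = n * c i0 := by
    rw [Finset.sum_congr rfl (fun j _ => hceq j)]
    simp [mul_comm]
  have hsum2 : ∑ j, 2*(s - c j) = 2*n*(s - c i0) := by
    rw [Finset.sum_congr rfl (fun j _ => by rw [hceq j])]
    simp; ring
  have Es : -(2*α*(s - x)) - (γ+ζ)*(2*n*(s - c i0))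
      - ((rs - rd)/(s - d)^2)*(n * c i0 - d*n) = 0 := by
    have h1 : HasDerivAt (fun s':ℝ => (s' - x)^2) (2*(s - x)) s := by
      simpa using ((hasDerivAt_id s).sub_const x).fun_pow 2
    have hsum : HasDerivAt (fun s':ℝ => ∑ j, (s' - c j)^2) (∑ j, 2*(s - c j)) s := by
      apply HasDerivAt.fun_sum
      intro j _
      simpa using ((hasDerivAt_id s).sub_const (c j)).fun_pow 2
    have hdiv : HasDerivAt (fun s':ℝ => (rs - rd)/(s' - d))
        ((0*(s - d) - (rs - rd)*1)/(s - d)^2) s :=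
      (hasDerivAt_const s (rs - rd)).div ((hasDerivAt_id s).sub_const d) hy
    have H : HasDerivAt (SW α β γ ζ rd rs d w x n c)
        (-(2*α*(s - x)) - (γ+ζ)*(∑ j, 2*(s - c j))
          - ((rs - rd)/(s - d)^2)*((∑ j, c j) - d*n)) s := by
      have hA := h1.const_mul α
      have hB := hsum.const_mul (γ+ζ)
      have hC := hdiv.mul_const ((∑ j, c j) - d*(n:ℝ))
      have := ((((hA.fun_neg.sub_const (β*∑ j, (w - c j)^2)).fun_sub hB).add_const (rd*(n:ℝ))).fun_add hC)
      have h2 : (SW α β γ ζ rd rs d w x n c) = fun s' =>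
          -(α*(s' - x)^2) - β*∑ j, (w - c j)^2 - (γ+ζ)*∑ j, (s' - c j)^2
            + rd*n + ((rs - rd)/(s' - d))*((∑ j, c j) - d*n) := by
        funext s'; simp only [SW]; ring
      rw [h2]
      refine this.congr_deriv ?_
      field_simp
      ring
    have := H.unique hstats
    rw [hsum1, hsum2] at this
    linarith [this]
  -- clear denominators and combine
  have keyc := key i0
  have hA : 2*β*(w - c i0)*(s - d) + 2*(γ+ζ)*(s - c i0)*(s - d) + (rs - rd) = 0 := by
    field_simp at keyc
    linear_combination keyc
  have hB : 2*α*(s - x)*(s - d)^2 + 2*(γ+ζ)*n*(s - c i0)*(s - d)^2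
      + (rs - rd)*n*(c i0 - d) = 0 := by
    field_simp at Es
    linear_combination -Es
  linear_combination ((rs - rd)*n - 2*(γ+ζ)*n*(s - d)^2) * hA + (2*(β+(γ+ζ))*(s - d)) * hB
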